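/- Let $\mathcal{E}_t$ be a nonexplosive continuous-time jump process on a countable set $\mathcal{N}$ with rates $Q_{xy}$, embedded discrete chain $\mathcal{E}_k$, and suppose there are constants $0 < \alpha_1 < \alpha_2 < \infty$ with $\alpha_1 \le \sum_{y \ne x} Q_{xy} \le \alpha_2$ for every $x$. Then for any $\mathcal{L} \subset \mathcal{N}$, almost surely the events $\{\int_0^\infty Q_{\mathcal{L}}(\mathcal{E}_t)\,dt = \infty\}$ and $\{\mathcal{E}_k \in \mathcal{L} \text{ infinitely often}\}$ coincide, where $Q_{\mathcal{L}}(x) = \sum_{y \in \mathcal{L}, y \ne x} Q_{xy}$. -/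

import Mathlib

open MeasureTheory Filter
open scoped Classical

section SchwartzAuxSec
open scoped ENNReal NNReal

namespace SchwartzAux


lemma tsum_ofReal_ne_top_iff {a : ℕ → ℝ} (h : ∀ k, 0 ≤ a k) :
    (∑' k, ENNReal.ofReal (a k)) ≠ ⊤ ↔ Summable a := by
  set b : ℕ → ℝ≥0 := fun k => ⟨a k, h k⟩ with hbdef
  have hb : ∀ k, ENNReal.ofReal (a k) = ((b k : ℝ≥0) : ℝ≥0∞) := fun k =>
    ENNReal.ofReal_eq_coe_nnreal (h k)
  simp_rw [hb]
  rw [ENNReal.tsum_coe_ne_top_iff_summable]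
  constructor
  · intro hs
    have := NNReal.summable_coe.2 hs
    exact this
  · intro hs
    rw [← NNReal.summable_coe]
    exact hs

lemma tsum_ofReal_eq_top_iff {a : ℕ → ℝ} (h : ∀ k, 0 ≤ a k) :
    (∑' k, ENNReal.ofReal (a k)) = ⊤ ↔
      Tendsto (fun n => ∑ k ∈ Finset.range n, a k) atTop atTop := by
  rw [← not_summable_iff_tendsto_nat_atTop_of_nonneg h, ← tsum_ofReal_ne_top_iff h]
  tauto

lemma trunc_sum_le {c : ℕ → ℝ} {B M : ℝ} (hM : 0 ≤ M) (hB : 0 ≤ B)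
    (h0 : ∀ k, 0 ≤ c k) (hb : ∀ k, c k ≤ B) :
    ∀ n, ∑ k ∈ Finset.range n,
      (if (∑ j ∈ Finset.range k, c j) ≤ M then c k else 0) ≤ M + B := by
  intro n
  induction n with
  | zero => simpa using add_nonneg hM hB
  | succ n ih =>
    rw [Finset.sum_range_succ]
    by_cases h : (∑ j ∈ Finset.range n, c j) ≤ M
    · rw [if_pos h]
      have h1 : ∑ k ∈ Finset.range n,
          (if (∑ j ∈ Finset.range k, c j) ≤ M then c k else 0) ≤ ∑ j ∈ Finset.range n, c j := by
        refine Finset.sum_le_sum fun k _ => ?_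
        split
        · exact le_rfl
        · exact h0 k
      linarith [hb n]
    · rw [if_neg h, add_zero]; exact ih

lemma ofReal_le_tsum_indicator (d : ℝ) :
    ENNReal.ofReal d ≤ ∑' j : ℕ, (if (j : ℝ) < d then (1 : ℝ≥0∞) else 0) := by
  calc ENNReal.ofReal d ≤ ENNReal.ofReal (⌈d⌉₊ : ℝ) := ENNReal.ofReal_le_ofReal (Nat.le_ceil d)
    _ = (⌈d⌉₊ : ℝ≥0∞) := ENNReal.ofReal_natCast _
    _ = ∑ _j ∈ Finset.range ⌈d⌉₊, (1 : ℝ≥0∞) := by simp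
    _ = ∑ j ∈ Finset.range ⌈d⌉₊, (if (j : ℝ) < d then (1 : ℝ≥0∞) else 0) :=
        Finset.sum_congr rfl fun j hj => by
          rw [if_pos (Nat.lt_ceil.1 (Finset.mem_range.1 hj))]
    _ ≤ ∑' j : ℕ, (if (j : ℝ) < d then (1 : ℝ≥0∞) else 0) := ENNReal.sum_le_tsum _

lemma tendsto_sum_atTop_of_mul_le {a b : ℕ → ℝ} {ε : ℝ} (hε : 0 < ε)
    (h : ∀ k, ε * a k ≤ b k)
    (ha : Tendsto (fun n => ∑ k ∈ Finset.range n, a k) atTop atTop) :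
    Tendsto (fun n => ∑ k ∈ Finset.range n, b k) atTop atTop := by
  refine tendsto_atTop_mono (fun n => ?_) (ha.const_mul_atTop hε)
  rw [Finset.mul_sum]
  exact Finset.sum_le_sum fun k _ => h k

variable {Ω : Type*} {m0 : MeasurableSpace Ω} {μ : Measure Ω}

lemma integrable_of_bdd [IsFiniteMeasure μ] {f : Ω → ℝ} {C : ℝ}
    (hf : AEStronglyMeasurable f μ) (h : ∀ ω, |f ω| ≤ C) : Integrable f μ :=
  Integrable.mono' (integrable_const C) hf (ae_of_all _ fun ω => by
    rw [Real.norm_eq_abs]; exact h ω)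

lemma integral_mul_condexp {m : MeasurableSpace Ω} (hm : m ≤ m0) [IsProbabilityMeasure μ]
    {g X : Ω → ℝ} (hg : StronglyMeasurable[m] g) {Cg CX : ℝ} (hgb : ∀ ω, |g ω| ≤ Cg)
    (hX : @AEStronglyMeasurable Ω ℝ _ m0 m0 X μ) (hXb : ∀ ω, |X ω| ≤ CX) :
    ∫ ω, g ω * X ω ∂μ = ∫ ω, g ω * (μ[X|m]) ω ∂μ := by
  have hXi : Integrable X μ := integrable_of_bdd hX hXb
  have hgXi : Integrable (g * X) μ := by
    refine integrable_of_bdd (((hg.mono hm).aestronglyMeasurable).mul hX) (C := Cg * CX)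
      fun ω => ?_
    rw [Pi.mul_apply, abs_mul]
    exact mul_le_mul (hgb ω) (hXb ω) (abs_nonneg _) ((abs_nonneg (g ω)).trans (hgb ω))
  have h1 := condExp_mul_of_stronglyMeasurable_left hg hgXi hXi
  have h2 : ∫ ω, (μ[g * X|m]) ω ∂μ = ∫ ω, (g * X) ω ∂μ := integral_condExp hm
  calc ∫ ω, g ω * X ω ∂μ = ∫ ω, (μ[g * X|m]) ω ∂μ := h2.symm
    _ = ∫ ω, (g * μ[X|m]) ω ∂μ := integral_congr_ae h1
    _ = ∫ ω, g ω * (μ[X|m]) ω ∂μ := rfl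


lemma stepA (μ : Measure Ω) [IsProbabilityMeasure μ]
    (ℱ : Filtration ℕ m0) (α₁ α₂ : ℝ) (hα₁ : 0 < α₁) (hα₂ : 0 < α₂)
    (c Δ lam : ℕ → Ω → ℝ)
    (hc : ∀ k, Measurable[ℱ k] (c k)) (hc0 : ∀ k ω, 0 ≤ c k ω) (hcb : ∀ k ω, c k ω ≤ α₂)
    (hΔ : ∀ k, Measurable[ℱ (k+1)] (Δ k)) (hΔ0 : ∀ k ω, 0 ≤ Δ k ω)
    (hlam1 : ∀ k ω, α₁ ≤ lam k ω) (hlam2 : ∀ k ω, lam k ω ≤ α₂)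
    (hhold : ∀ (k : ℕ) (s : ℝ), 0 ≤ s →
      μ[Set.indicator {ω | s < Δ k ω} (fun _ => (1 : ℝ)) | ℱ k] =ᵐ[μ]
        fun ω => Real.exp (-(lam k ω) * s)) :
    ∀ᵐ ω ∂μ, ((∑' k, ENNReal.ofReal (c k ω) * ENNReal.ofReal (Δ k ω)) = ⊤ ↔
      (∑' k, ENNReal.ofReal (c k ω)) = ⊤) := by
  have hcm0 : ∀ k, Measurable (c k) := fun k => (hc k).mono (ℱ.le k) le_rfl
  have hΔm0 : ∀ k, Measurable (Δ k) := fun k => (hΔ k).mono (ℱ.le (k+1)) le_rfl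
  -- ### Part 1 : divergence
  set D : ℕ → Ω → ℝ := fun k ω => min (Δ k ω) 1 with hDdef
  have hDmeas : ∀ k, Measurable[ℱ (k+1)] (D k) := fun k => (hΔ k).min measurable_const
  have hD0 : ∀ k ω, 0 ≤ D k ω := fun k ω => le_min (hΔ0 k ω) zero_le_one
  have hD1 : ∀ k ω, D k ω ≤ 1 := fun k ω => min_le_right _ _
  have hDint : ∀ k, Integrable (D k) μ := fun k =>
    integrable_of_bdd ((hDmeas k).mono (ℱ.le _) le_rfl).aestronglyMeasurable (C := 1)
      (fun ω => abs_le.2 ⟨by linarith [hD0 k ω], hD1 k ω⟩)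
  set g : ℕ → Ω → ℝ := fun n ω => ∑ k ∈ Finset.range n, c k ω * D k ω with hgdef
  have hgmeas : ∀ n, Measurable[ℱ n] (g n) := by
    intro n
    refine Finset.measurable_sum _ fun k hk => ?_
    have hk' := Finset.mem_range.1 hk
    exact ((hc k).mono (ℱ.mono hk'.le) le_rfl).mul ((hDmeas k).mono (ℱ.mono hk') le_rfl)
  have hgadp : StronglyAdapted ℱ g := fun n => (hgmeas n).stronglyMeasurable
  have hcD0 : ∀ k ω, 0 ≤ c k ω * D k ω := fun k ω => mul_nonneg (hc0 k ω) (hD0 k ω)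
  have hcDb : ∀ k ω, c k ω * D k ω ≤ α₂ := fun k ω => by
    calc c k ω * D k ω ≤ α₂ * 1 :=
      mul_le_mul (hcb k ω) (hD1 k ω) (hD0 k ω) hα₂.le
    _ = α₂ := mul_one _
  have hgint : ∀ n, Integrable (g n) μ := by
    intro n
    refine integrable_of_bdd ((hgmeas n).mono (ℱ.le n) le_rfl).aestronglyMeasurable
      (C := n * α₂) fun ω => ?_
    calc |g n ω| ≤ ∑ k ∈ Finset.range n, |c k ω * D k ω| := Finset.abs_sum_le_sum_abs _ _
      _ ≤ ∑ _k ∈ Finset.range n, α₂ := Finset.sum_le_sum fun k _ => by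
            rw [abs_of_nonneg (hcD0 k ω)]; exact hcDb k ω
      _ = n * α₂ := by rw [Finset.sum_const, Finset.card_range, nsmul_eq_mul]
  have hgmono : ∀ ω, ∀ n, g n ω ≤ g (n+1) ω := by
    intro ω n
    simp only [hgdef, Finset.sum_range_succ]
    exact le_add_of_nonneg_right (hcD0 n ω)
  set R : ℝ≥0 := ⟨α₂, hα₂.le⟩ with hRdef
  have hgbdd : ∀ ω, ∀ n, |g (n+1) ω - g n ω| ≤ (R : ℝ) := by
    intro ω n
    simp only [hgdef, Finset.sum_range_succ, add_sub_cancel_left]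
    rw [abs_of_nonneg (hcD0 n ω)]
    exact hcDb n ω
  have key := tendsto_sum_indicator_atTop_iff (μ := μ) (ℱ := ℱ) (R := R)
    (ae_of_all _ hgmono) hgadp hgint (ae_of_all _ hgbdd)
  have hdiff : ∀ i, g (i+1) - g i = fun ω => c i ω * D i ω := by
    intro i; funext ω
    simp [hgdef, Finset.sum_range_succ]
  have hpull : ∀ i, μ[g (i+1) - g i|ℱ i] =ᵐ[μ] fun ω => c i ω * (μ[D i|ℱ i]) ω := by
    intro i
    rw [hdiff i]
    have hint : Integrable (c i * D i) μ := by
      refine integrable_of_bdd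
        (((hcm0 i).mul ((hΔm0 i).min measurable_const)).aestronglyMeasurable)
        (C := α₂) fun ω => ?_
      rw [Pi.mul_apply, abs_of_nonneg (hcD0 i ω)]
      exact hcDb i ω
    exact condExp_mul_of_stronglyMeasurable_left (μ := μ) (m := ℱ i)
      ((hc i).stronglyMeasurable) hint (hDint i)
  have hup : ∀ i, ∀ᵐ ω ∂μ, (μ[D i|ℱ i]) ω ≤ 1 := by
    intro i
    have h1 : μ[D i|ℱ i] ≤ᵐ[μ] μ[(fun _ => (1:ℝ))|ℱ i] :=
      condExp_mono (hDint i) (integrable_const 1) (ae_of_all _ fun ω => hD1 i ω)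
    have h2 : μ[(fun _ => (1:ℝ))|ℱ i] = fun _ => (1:ℝ) := condExp_const (ℱ.le i) 1
    filter_upwards [h1] with ω hω
    rw [h2] at hω; exact hω
  have hlow : ∀ i, ∀ᵐ ω ∂μ, Real.exp (-α₂) ≤ (μ[D i|ℱ i]) ω := by
    intro i
    set ind : Ω → ℝ := Set.indicator {ω | (1:ℝ) < Δ i ω} (fun _ => (1:ℝ)) with hinddef
    have hindint : Integrable ind μ := by
      refine integrable_of_bdd ((measurable_const.indicator
        (measurableSet_lt measurable_const (hΔm0 i))).aestronglyMeasurable) (C := 1) fun ω => ?_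
      by_cases h : (1:ℝ) < Δ i ω <;>
        simp [hinddef, Set.indicator_apply, h, abs_of_nonneg]
    have hle : ∀ ω, ind ω ≤ D i ω := by
      intro ω
      by_cases h : (1:ℝ) < Δ i ω
      · simp only [hinddef, Set.indicator_apply, Set.mem_setOf_eq, h, if_true]
        exact le_min h.le le_rfl
      · simp only [hinddef, Set.indicator_apply, Set.mem_setOf_eq, h, if_false]
        exact hD0 i ω
    have h1 : μ[ind|ℱ i] ≤ᵐ[μ] μ[D i|ℱ i] :=
      condExp_mono hindint (hDint i) (ae_of_all _ hle)
    have h2 := hhold i 1 zero_le_one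
    filter_upwards [h1, h2] with ω hω1 hω2
    calc Real.exp (-α₂) ≤ Real.exp (-(lam i ω) * 1) := by
          rw [mul_one]; exact Real.exp_le_exp.2 (by linarith [hlam2 i ω])
      _ = (μ[ind|ℱ i]) ω := hω2.symm
      _ ≤ (μ[D i|ℱ i]) ω := hω1
  have part1 : ∀ᵐ ω ∂μ, ((∑' k, ENNReal.ofReal (c k ω)) = ⊤ →
      (∑' k, ENNReal.ofReal (c k ω) * ENNReal.ofReal (Δ k ω)) = ⊤) := by
    filter_upwards [key, ae_all_iff.2 hpull, ae_all_iff.2 hup, ae_all_iff.2 hlow]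
      with ω hkey hpw hupw hloww htop
    have h1 : Tendsto (fun n => ∑ k ∈ Finset.range n, c k ω) atTop atTop :=
      (tsum_ofReal_eq_top_iff (fun k => hc0 k ω)).1 htop
    have h2 : Tendsto (fun n => ∑ k ∈ Finset.range n, c k ω * (μ[D k|ℱ k]) ω) atTop atTop := by
      refine tendsto_sum_atTop_of_mul_le (ε := Real.exp (-α₂)) (Real.exp_pos _) (fun k => ?_) h1
      calc Real.exp (-α₂) * c k ω = c k ω * Real.exp (-α₂) := mul_comm _ _
        _ ≤ c k ω * (μ[D k|ℱ k]) ω := mul_le_mul_of_nonneg_left (hloww k) (hc0 k ω)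
    have h3 : Tendsto (fun n => predictablePart g ℱ μ n ω) atTop atTop := by
      refine h2.congr fun n => ?_
      rw [predictablePart, Finset.sum_apply]
      exact Finset.sum_congr rfl fun i _ => (hpw i).symm
    have h4 : Tendsto (fun n => g n ω) atTop atTop := hkey.2 h3
    have h5 : (∑' k, ENNReal.ofReal (c k ω * D k ω)) = ⊤ :=
      (tsum_ofReal_eq_top_iff (fun k => hcD0 k ω)).2 h4
    have h6 : (∑' k, ENNReal.ofReal (c k ω * D k ω)) ≤
        ∑' k, ENNReal.ofReal (c k ω) * ENNReal.ofReal (Δ k ω) := by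
      refine ENNReal.tsum_le_tsum fun k => ?_
      rw [ENNReal.ofReal_mul (hc0 k ω)]
      exact mul_le_mul_right (ENNReal.ofReal_le_ofReal (min_le_left _ _)) _
    rw [h5] at h6
    exact top_le_iff.1 h6
  -- ### Part 2 : convergence
  have part2 : ∀ᵐ ω ∂μ, ∀ M : ℕ, (∑' k, ENNReal.ofReal (c k ω)) ≤ (M : ℝ≥0∞) →
      (∑' k, ENNReal.ofReal (c k ω) * ENNReal.ofReal (Δ k ω)) ≠ ⊤ := by
    rw [ae_all_iff]
    intro M
    set G : ℕ → Ω → ℝ := fun k ω =>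
      if (∑ j ∈ Finset.range k, c j ω) ≤ (M : ℝ) then c k ω else 0 with hGdef
    have hGmeas : ∀ k, Measurable[ℱ k] (G k) := by
      intro k
      have hset : MeasurableSet[ℱ k] {ω | (∑ j ∈ Finset.range k, c j ω) ≤ (M : ℝ)} := by
        refine measurableSet_le (Finset.measurable_sum _ fun j hj => ?_) measurable_const
        exact (hc j).mono (ℱ.mono (Finset.mem_range.1 hj).le) le_rfl
      exact Measurable.ite hset (hc k) measurable_const
    have hGm0 : ∀ k, Measurable (G k) := fun k => (hGmeas k).mono (ℱ.le k) le_rfl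
    have hG0 : ∀ k ω, 0 ≤ G k ω := by
      intro k ω; rw [hGdef]; dsimp only; split
      · exact hc0 k ω
      · exact le_rfl
    have hGb : ∀ k ω, G k ω ≤ α₂ := by
      intro k ω; rw [hGdef]; dsimp only; split
      · exact hcb k ω
      · exact hα₂.le
    have hGint : ∀ k, Integrable (G k) μ := fun k =>
      integrable_of_bdd (hGm0 k).aestronglyMeasurable (C := α₂)
        (fun ω => by rw [abs_of_nonneg (hG0 k ω)]; exact hGb k ω)
    have hGofReal : ∀ k, ENNReal.ofReal (∫ ω, G k ω ∂μ) = ∫⁻ ω, ENNReal.ofReal (G k ω) ∂μ :=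
      fun k => ofReal_integral_eq_lintegral_ofReal (hGint k) (ae_of_all _ fun ω => hG0 k ω)
    set r : ℝ≥0∞ := ENNReal.ofReal (Real.exp (-α₁)) with hrdef
    have hr1 : r < 1 := by
      rw [hrdef]
      exact ENNReal.ofReal_lt_one.2 (Real.exp_lt_one_iff.2 (by linarith))
    -- single (k, j) bound
    have hkj : ∀ (k j : ℕ), (∫⁻ ω, ENNReal.ofReal (G k ω) *
        (if (j : ℝ) < Δ k ω then (1:ℝ≥0∞) else 0) ∂μ) ≤
        r ^ j * ENNReal.ofReal (∫ ω, G k ω ∂μ) := by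
      intro k j
      set ind : Ω → ℝ := Set.indicator {ω | (j:ℝ) < Δ k ω} (fun _ => (1:ℝ)) with hinddef
      have hsetm : MeasurableSet {ω | (j:ℝ) < Δ k ω} :=
        measurableSet_lt measurable_const (hΔm0 k)
      have hindm : AEStronglyMeasurable ind μ :=
        (measurable_const.indicator hsetm).aestronglyMeasurable
      have hindb : ∀ ω, |ind ω| ≤ 1 := by
        intro ω
        by_cases h : (j:ℝ) < Δ k ω <;>
          simp [hinddef, Set.indicator_apply, h, abs_of_nonneg]
      have hGind_int : Integrable (fun ω => G k ω * ind ω) μ := by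
        refine integrable_of_bdd ((hGm0 k).aestronglyMeasurable.mul hindm) (C := α₂)
          fun ω => ?_
        rw [abs_mul, abs_of_nonneg (hG0 k ω)]
        calc G k ω * |ind ω| ≤ α₂ * 1 :=
          mul_le_mul (hGb k ω) (hindb ω) (abs_nonneg _) hα₂.le
        _ = α₂ := mul_one _
      have e1 : (∫⁻ ω, ENNReal.ofReal (G k ω) *
          (if (j : ℝ) < Δ k ω then (1:ℝ≥0∞) else 0) ∂μ) =
          ∫⁻ ω, ENNReal.ofReal (G k ω * ind ω) ∂μ := by
        refine lintegral_congr fun ω => ?_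
        by_cases h : (j:ℝ) < Δ k ω <;>
          simp [hinddef, Set.indicator_apply, h]
      have e2 : (∫⁻ ω, ENNReal.ofReal (G k ω * ind ω) ∂μ) =
          ENNReal.ofReal (∫ ω, G k ω * ind ω ∂μ) :=
        (ofReal_integral_eq_lintegral_ofReal hGind_int
          (ae_of_all _ fun ω => mul_nonneg (hG0 k ω) (by
            by_cases h : (j:ℝ) < Δ k ω <;> simp [hinddef, Set.indicator_apply, h]))).symm
      have e3 : (∫ ω, G k ω * ind ω ∂μ) = ∫ ω, G k ω * (μ[ind|ℱ k]) ω ∂μ :=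
        integral_mul_condexp (ℱ.le k) ((hGmeas k).stronglyMeasurable)
          (Cg := α₂) (fun ω => by rw [abs_of_nonneg (hG0 k ω)]; exact hGb k ω)
          hindm hindb
      have e4 : (∫ ω, G k ω * (μ[ind|ℱ k]) ω ∂μ) ≤
          Real.exp (-α₁ * j) * ∫ ω, G k ω ∂μ := by
        rw [← integral_const_mul]
        have hXint : Integrable (fun ω => G k ω * (μ[ind|ℱ k]) ω) μ :=
          integrable_condExp.bdd_mul (hGm0 k).aestronglyMeasurable
            (c := α₂) (ae_of_all _ fun ω => by rw [Real.norm_eq_abs, abs_of_nonneg (hG0 k ω)]; exact hGb k ω)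
        refine integral_mono_ae hXint ((hGint k).const_mul _) ?_
        filter_upwards [hhold k j (Nat.cast_nonneg j)] with ω hω
        rw [hω]
        calc G k ω * Real.exp (-(lam k ω) * j) ≤ G k ω * Real.exp (-α₁ * j) :=
            mul_le_mul_of_nonneg_left (Real.exp_le_exp.2
              (mul_le_mul_of_nonneg_right (neg_le_neg (hlam1 k ω)) (Nat.cast_nonneg j)))
              (hG0 k ω)
          _ = Real.exp (-α₁ * j) * G k ω := mul_comm _ _
      have e6 : ENNReal.ofReal (Real.exp (-α₁ * j)) = r ^ j := by
        rw [hrdef, ← ENNReal.ofReal_pow (Real.exp_pos _).le, ← Real.exp_nat_mul]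
        ring_nf
      calc (∫⁻ ω, ENNReal.ofReal (G k ω) * (if (j : ℝ) < Δ k ω then (1:ℝ≥0∞) else 0) ∂μ)
          = ENNReal.ofReal (∫ ω, G k ω * ind ω ∂μ) := by rw [e1, e2]
        _ = ENNReal.ofReal (∫ ω, G k ω * (μ[ind|ℱ k]) ω ∂μ) := by rw [e3]
        _ ≤ ENNReal.ofReal (Real.exp (-α₁ * j) * ∫ ω, G k ω ∂μ) := ENNReal.ofReal_le_ofReal e4
        _ = ENNReal.ofReal (Real.exp (-α₁ * j)) * ENNReal.ofReal (∫ ω, G k ω ∂μ) :=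
            ENNReal.ofReal_mul (Real.exp_pos _).le
        _ = r ^ j * ENNReal.ofReal (∫ ω, G k ω ∂μ) := by rw [e6]
    -- per-k bound
    have hk : ∀ k, (∫⁻ ω, ENNReal.ofReal (G k ω) * ENNReal.ofReal (Δ k ω) ∂μ) ≤
        (1 - r)⁻¹ * ENNReal.ofReal (∫ ω, G k ω ∂μ) := by
      intro k
      calc (∫⁻ ω, ENNReal.ofReal (G k ω) * ENNReal.ofReal (Δ k ω) ∂μ)
          ≤ ∫⁻ ω, ∑' j : ℕ, ENNReal.ofReal (G k ω) *
              (if (j : ℝ) < Δ k ω then (1:ℝ≥0∞) else 0) ∂μ := by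
            refine lintegral_mono fun ω => ?_
            rw [ENNReal.tsum_mul_left]
            exact mul_le_mul_right (ofReal_le_tsum_indicator (Δ k ω)) _
        _ = ∑' j : ℕ, ∫⁻ ω, ENNReal.ofReal (G k ω) *
              (if (j : ℝ) < Δ k ω then (1:ℝ≥0∞) else 0) ∂μ := by
            refine lintegral_tsum fun j => ?_
            refine ((ENNReal.measurable_ofReal.comp (hGm0 k)).mul ?_).aemeasurable
            exact Measurable.ite (measurableSet_lt measurable_const (hΔm0 k))
              measurable_const measurable_const
        _ ≤ ∑' j : ℕ, r ^ j * ENNReal.ofReal (∫ ω, G k ω ∂μ) :=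
            ENNReal.tsum_le_tsum fun j => hkj k j
        _ = (∑' j : ℕ, r ^ j) * ENNReal.ofReal (∫ ω, G k ω ∂μ) := ENNReal.tsum_mul_right
        _ = (1 - r)⁻¹ * ENNReal.ofReal (∫ ω, G k ω ∂μ) := by rw [ENNReal.tsum_geometric]
    -- total bound
    have htot : (∫⁻ ω, (∑' k, ENNReal.ofReal (G k ω) * ENNReal.ofReal (Δ k ω)) ∂μ) ≤
        (1 - r)⁻¹ * ENNReal.ofReal ((M : ℝ) + α₂) := by
      have hsum_bound : ∀ ω, (∑' k, ENNReal.ofReal (G k ω)) ≤ ENNReal.ofReal ((M : ℝ) + α₂) := by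
        intro ω
        rw [ENNReal.tsum_eq_iSup_sum]
        refine iSup_le fun s => ?_
        obtain ⟨n, hn⟩ := s.exists_nat_subset_range
        calc (∑ k ∈ s, ENNReal.ofReal (G k ω))
            ≤ ∑ k ∈ Finset.range n, ENNReal.ofReal (G k ω) :=
              Finset.sum_le_sum_of_subset hn
          _ = ENNReal.ofReal (∑ k ∈ Finset.range n, G k ω) :=
              (ENNReal.ofReal_sum_of_nonneg fun k _ => hG0 k ω).symm
          _ ≤ ENNReal.ofReal ((M : ℝ) + α₂) := ENNReal.ofReal_le_ofReal
              (trunc_sum_le (Nat.cast_nonneg M) hα₂.le (fun k => hc0 k ω) (fun k => hcb k ω) n)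
      calc (∫⁻ ω, (∑' k, ENNReal.ofReal (G k ω) * ENNReal.ofReal (Δ k ω)) ∂μ)
          = ∑' k, ∫⁻ ω, ENNReal.ofReal (G k ω) * ENNReal.ofReal (Δ k ω) ∂μ := by
            refine lintegral_tsum fun k => ?_
            exact ((ENNReal.measurable_ofReal.comp (hGm0 k)).mul
              (ENNReal.measurable_ofReal.comp (hΔm0 k))).aemeasurable
        _ ≤ ∑' k, (1 - r)⁻¹ * ENNReal.ofReal (∫ ω, G k ω ∂μ) := ENNReal.tsum_le_tsum hk
        _ = (1 - r)⁻¹ * ∑' k, ENNReal.ofReal (∫ ω, G k ω ∂μ) := ENNReal.tsum_mul_left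
        _ = (1 - r)⁻¹ * ∑' k, ∫⁻ ω, ENNReal.ofReal (G k ω) ∂μ := by
            congr 1
            exact tsum_congr fun k => hGofReal k
        _ = (1 - r)⁻¹ * ∫⁻ ω, (∑' k, ENNReal.ofReal (G k ω)) ∂μ := by
            congr 1
            exact (lintegral_tsum fun k =>
              (ENNReal.measurable_ofReal.comp (hGm0 k)).aemeasurable).symm
        _ ≤ (1 - r)⁻¹ * ENNReal.ofReal ((M : ℝ) + α₂) := by
            refine mul_le_mul_right ?_ _
            calc (∫⁻ ω, (∑' k, ENNReal.ofReal (G k ω)) ∂μ)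
                ≤ ∫⁻ _ω, ENNReal.ofReal ((M : ℝ) + α₂) ∂μ := lintegral_mono hsum_bound
              _ = ENNReal.ofReal ((M : ℝ) + α₂) := by
                  rw [lintegral_const, measure_univ, mul_one]
    have hfin : (1 - r)⁻¹ * ENNReal.ofReal ((M : ℝ) + α₂) < ⊤ :=
      ENNReal.mul_lt_top (ENNReal.inv_lt_top.2 (tsub_pos_of_lt hr1)) ENNReal.ofReal_lt_top
    have hmeasF : Measurable (fun ω => ∑' k, ENNReal.ofReal (G k ω) * ENNReal.ofReal (Δ k ω)) :=
      Measurable.ennreal_tsum fun k =>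
        (ENNReal.measurable_ofReal.comp (hGm0 k)).mul (ENNReal.measurable_ofReal.comp (hΔm0 k))
    have hae := ae_lt_top hmeasF (lt_of_le_of_lt htot hfin).ne
    filter_upwards [hae] with ω hω hle
    have hall : ∀ k, G k ω = c k ω := by
      intro k
      rw [hGdef]
      dsimp only
      rw [if_pos]
      have h1 : ENNReal.ofReal (∑ j ∈ Finset.range k, c j ω) ≤ ((M : ℕ) : ℝ≥0∞) := by
        rw [ENNReal.ofReal_sum_of_nonneg fun j _ => hc0 j ω]
        exact le_trans (ENNReal.sum_le_tsum _) hle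
      rw [← ENNReal.ofReal_natCast M] at h1
      exact (ENNReal.ofReal_le_ofReal_iff (Nat.cast_nonneg M)).1 h1
    have : (∑' k, ENNReal.ofReal (c k ω) * ENNReal.ofReal (Δ k ω)) =
        ∑' k, ENNReal.ofReal (G k ω) * ENNReal.ofReal (Δ k ω) :=
      tsum_congr fun k => by rw [hall k]
    rw [this]
    exact hω.ne
  -- ### combine
  filter_upwards [part1, part2] with ω h1 h2
  constructor
  · intro htop
    by_contra hne
    obtain ⟨M, hM⟩ := ENNReal.exists_nat_gt hne
    exact h2 M hM.le htop
  · exact h1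


/-- total jump rate out of `x` -/
noncomputable def Qtot {N : Type*} (Q : N → N → ℝ) (x : N) : ℝ :=
  ∑' y, if y ≠ x then Q x y else 0

/-- jump rate from `x` into `L` -/
noncomputable def QL {N : Type*} (Q : N → N → ℝ) (L : Set N) (x : N) : ℝ :=
  ∑' y, if y ∈ L ∧ y ≠ x then Q x y else 0

lemma Qtot_def {N : Type*} (Q : N → N → ℝ) (x : N) :
    (∑' y, if y ≠ x then Q x y else 0) = Qtot Q x := rfl

lemma QL_def {N : Type*} (Q : N → N → ℝ) (L : Set N) (x : N) :
    (∑' y, if y ∈ L ∧ y ≠ x then Q x y else 0) = QL Q L x := rfl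

end SchwartzAux

end SchwartzAuxSec

open SchwartzAux

/-- Lemma 3.6 (after Schwartz): for a nonexplosive continuous-time jump process with total
jump rates bounded between `α₁ > 0` and `α₂ < ∞`, embedded chain `Eₖ` and jump times `τₖ`,
and any set `L`, almost surely `∫₀^∞ Q_L(E_t) dt = ∞` iff `Eₖ ∈ L` infinitely often. -/
theorem integral_infinite_iff_io
    {N : Type*} [Countable N] {Ω : Type*} {m0 : MeasurableSpace Ω}
    (μ : Measure Ω) [IsProbabilityMeasure μ]
    (Q : N → N → ℝ) (hQ : ∀ x y, 0 ≤ Q x y)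
    (α₁ α₂ : ℝ) (hα₁ : 0 < α₁) (hα₁₂ : α₁ < α₂)
    (hrate : ∀ x : N, α₁ ≤ (∑' y, if y ≠ x then Q x y else 0) ∧
      (∑' y, if y ≠ x then Q x y else 0) ≤ α₂)
    (L : Set N)
    (E : ℝ → Ω → N)          -- the continuous-time process
    (Ek : ℕ → Ω → N)         -- the embedded discrete chain
    (τ : ℕ → Ω → ℝ)          -- the jump times
    (hτ0 : ∀ ω, τ 0 ω = 0)
    (hτmono : ∀ ω, StrictMono (fun k => τ k ω))
    (hnonexpl : ∀ ω, Filter.Tendsto (fun k => τ k ω) Filter.atTop Filter.atTop)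
    (hembed : ∀ ω k t, τ k ω ≤ t → t < τ (k + 1) ω → E t ω = Ek k ω)
    (ℱ : Filtration ℕ m0)
    (hadp : ∀ k, @Measurable Ω N (ℱ k) ⊤ (Ek k) ∧ @Measurable Ω ℝ (ℱ k) _ (τ k))
    -- jump-chain transition probabilities Q(x,y)/Q(x)
    (hjump : ∀ (k : ℕ) (L' : Set N),
      μ[Set.indicator {ω | Ek (k + 1) ω ∈ L'} (fun _ => (1 : ℝ)) | ℱ k] =ᵐ[μ]
        fun ω => (∑' y, if y ∈ L' ∧ y ≠ Ek k ω then Q (Ek k ω) y else 0) /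
          (∑' y, if y ≠ Ek k ω then Q (Ek k ω) y else 0))
    -- conditionally exponential holding times with rate Q(Eₖ)
    (hhold : ∀ (k : ℕ) (s : ℝ), 0 ≤ s →
      μ[Set.indicator {ω | s < τ (k + 1) ω - τ k ω} (fun _ => (1 : ℝ)) | ℱ k] =ᵐ[μ]
        fun ω => Real.exp (-(∑' y, if y ≠ Ek k ω then Q (Ek k ω) y else 0) * s)) :
    ∀ᵐ ω ∂μ,
      ((∫⁻ t in Set.Ici (0 : ℝ),
          ENNReal.ofReal (∑' y, if y ∈ L ∧ y ≠ E t ω then Q (E t ω) y else 0) = ⊤) ↔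
        {k : ℕ | Ek k ω ∈ L}.Infinite) := by
  simp_rw [QL_def, Qtot_def] at hjump hhold ⊢
  have hα₂ : 0 < α₂ := hα₁.trans hα₁₂
  -- basic facts about the rates
  have hrate' : ∀ x, α₁ ≤ Qtot Q x ∧ Qtot Q x ≤ α₂ := by
    intro x
    have := hrate x
    rwa [Qtot_def] at this
  have hterm_nonneg : ∀ x y, 0 ≤ (if y ≠ x then Q x y else 0) := by
    intro x y; split
    · exact hQ x y
    · exact le_rfl
  have hfterm_nonneg : ∀ x y, 0 ≤ (if y ∈ L ∧ y ≠ x then Q x y else 0) := by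
    intro x y; split
    · exact hQ x y
    · exact le_rfl
  have hf_le_term : ∀ x y,
      (if y ∈ L ∧ y ≠ x then Q x y else 0) ≤ (if y ≠ x then Q x y else 0) := by
    intro x y
    by_cases h : y ∈ L ∧ y ≠ x
    · rw [if_pos h, if_pos h.2]
    · rw [if_neg h]
      exact hterm_nonneg x y
  have hlam_summ : ∀ x, Summable (fun y => if y ≠ x then Q x y else 0) := by
    intro x
    by_contra h
    have h0 := tsum_eq_zero_of_not_summable h
    have h1 := (hrate' x).1
    rw [Qtot] at h1
    rw [h0] at h1
    linarith
  have hf_summ : ∀ x, Summable (fun y => if y ∈ L ∧ y ≠ x then Q x y else 0) := fun x =>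
    (hlam_summ x).of_nonneg_of_le (hfterm_nonneg x) (hf_le_term x)
  have hf0 : ∀ x, 0 ≤ QL Q L x := fun x => tsum_nonneg (hfterm_nonneg x)
  have hfle : ∀ x, QL Q L x ≤ Qtot Q x := fun x =>
    Summable.tsum_le_tsum (hf_le_term x) (hf_summ x) (hlam_summ x)
  have hfb : ∀ x, QL Q L x ≤ α₂ := fun x => (hfle x).trans (hrate' x).2
  have hQtot_pos : ∀ x, 0 < Qtot Q x := fun x => hα₁.trans_le (hrate' x).1
  -- processes for stepA
  set c : ℕ → Ω → ℝ := fun k ω => QL Q L (Ek k ω) with hcdef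
  set Δ : ℕ → Ω → ℝ := fun k ω => τ (k+1) ω - τ k ω with hΔdef
  set lam : ℕ → Ω → ℝ := fun k ω => Qtot Q (Ek k ω) with hlamdef
  have hfmeas : @Measurable N ℝ ⊤ _ (QL Q L) := measurable_from_top
  have hcmeas : ∀ k, Measurable[ℱ k] (c k) := fun k => hfmeas.comp (hadp k).1
  have hc0 : ∀ k ω, 0 ≤ c k ω := fun k ω => hf0 _
  have hcb : ∀ k ω, c k ω ≤ α₂ := fun k ω => hfb _
  have hΔmeas : ∀ k, Measurable[ℱ (k+1)] (Δ k) :=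
    fun k => (hadp (k+1)).2.sub ((hadp k).2.mono (ℱ.mono (Nat.le_succ k)) le_rfl)
  have hΔ0 : ∀ k ω, 0 ≤ Δ k ω := fun k ω =>
    sub_nonneg.2 (hτmono ω (Nat.lt_succ_self k)).le
  have hlam1 : ∀ k ω, α₁ ≤ lam k ω := fun k ω => (hrate' _).1
  have hlam2 : ∀ k ω, lam k ω ≤ α₂ := fun k ω => (hrate' _).2
  have hA := stepA μ ℱ α₁ α₂ hα₁ hα₂ c Δ lam hcmeas hc0 hcb hΔmeas hΔ0 hlam1 hlam2
    (fun k s hs => hhold k s hs)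
  -- pathwise identification of the integral
  have hpath : ∀ ω, (∫⁻ t in Set.Ici (0:ℝ), ENNReal.ofReal (QL Q L (E t ω))) =
      ∑' k, ENNReal.ofReal (c k ω) * ENNReal.ofReal (Δ k ω) := by
    intro ω
    have hmono := (hτmono ω).monotone
    have hcover : Set.Ici (0:ℝ) = ⋃ k, Set.Ico (τ k ω) (τ (k+1) ω) := by
      ext t
      simp only [Set.mem_Ici, Set.mem_iUnion, Set.mem_Ico]
      constructor
      · intro ht
        have hex : ∃ k, t < τ k ω := ((hnonexpl ω).eventually_gt_atTop t).exists
        have hk : t < τ (Nat.find hex) ω := Nat.find_spec hex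
        have hkpos : Nat.find hex ≠ 0 := by
          intro h0
          rw [h0, hτ0 ω] at hk
          linarith
        obtain ⟨m, hm⟩ := Nat.exists_eq_succ_of_ne_zero hkpos
        refine ⟨m, ?_, ?_⟩
        · by_contra h
          push_neg at h
          exact Nat.find_min hex (by omega) h
        · have hk2 := hk; rw [hm] at hk2; exact hk2
      · rintro ⟨k, hk1, _⟩
        calc (0:ℝ) = τ 0 ω := (hτ0 ω).symm
          _ ≤ τ k ω := hmono (Nat.zero_le k)
          _ ≤ t := hk1
    have hdisj : Pairwise (Function.onFun Disjoint fun k => Set.Ico (τ k ω) (τ (k+1) ω)) := by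
      have key : ∀ i j, i < j →
          Disjoint (Set.Ico (τ i ω) (τ (i+1) ω)) (Set.Ico (τ j ω) (τ (j+1) ω)) := by
        intro i j hij
        refine Set.Ico_disjoint_Ico.2 ?_
        calc min (τ (i+1) ω) (τ (j+1) ω) ≤ τ (i+1) ω := min_le_left _ _
          _ ≤ τ j ω := hmono hij
          _ ≤ max (τ i ω) (τ j ω) := le_max_right _ _
      intro i j hij
      rcases Ne.lt_or_gt hij with h | h
      · exact key i j h
      · exact (key j i h).symm
    rw [hcover, lintegral_iUnion (fun k => measurableSet_Ico) hdisj]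
    refine tsum_congr fun k => ?_
    have hconst : ∀ t ∈ Set.Ico (τ k ω) (τ (k+1) ω),
        ENNReal.ofReal (QL Q L (E t ω)) = ENNReal.ofReal (c k ω) := by
      intro t ht
      rw [hcdef]
      dsimp only
      rw [hembed ω k t ht.1 ht.2]
    rw [setLIntegral_congr_fun measurableSet_Ico hconst,
      setLIntegral_const, Real.volume_Ico]
  -- step B : Lévy's Borel–Cantelli for the visits
  set s : ℕ → Set Ω := fun k => {ω | Ek k ω ∈ L} with hsdef
  have hsmeas : ∀ n, MeasurableSet[ℱ n] (s n) := fun n => (hadp n).1 trivial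
  have hBC := ae_mem_limsup_atTop_iff μ hsmeas
  have hcond : ∀ k, μ[(s (k+1)).indicator (1 : Ω → ℝ)|ℱ k] =ᵐ[μ]
      fun ω => QL Q L (Ek k ω) / Qtot Q (Ek k ω) := fun k => hjump k L
  have stepB : ∀ᵐ ω ∂μ,
      ({k : ℕ | Ek k ω ∈ L}.Infinite ↔ (∑' k, ENNReal.ofReal (c k ω)) = ⊤) := by
    filter_upwards [hBC, ae_all_iff.2 hcond] with ω h1 h2
    have hmem : ω ∈ limsup s atTop ↔ {k : ℕ | Ek k ω ∈ L}.Infinite := by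
      rw [mem_limsup_iff_frequently_mem]
      exact Nat.frequently_atTop_iff_infinite
    rw [← hmem, h1, tsum_ofReal_eq_top_iff (fun k => hc0 k ω)]
    constructor
    · intro ht
      have ht' : Tendsto (fun n => ∑ k ∈ Finset.range n,
          QL Q L (Ek k ω) / Qtot Q (Ek k ω)) atTop atTop :=
        ht.congr fun n => Finset.sum_congr rfl fun k _ => h2 k
      refine tendsto_sum_atTop_of_mul_le (ε := α₁) hα₁ (fun k => ?_) ht'
      have hpos := hQtot_pos (Ek k ω)
      calc α₁ * (QL Q L (Ek k ω) / Qtot Q (Ek k ω))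
          ≤ α₁ * (QL Q L (Ek k ω) / α₁) := by
            refine mul_le_mul_of_nonneg_left ?_ hα₁.le
            exact div_le_div_of_nonneg_left (hf0 _) hα₁ (hrate' _).1
        _ = QL Q L (Ek k ω) := mul_div_cancel₀ _ hα₁.ne'
        _ = c k ω := rfl
    · intro ht
      have ht' : Tendsto (fun n => ∑ k ∈ Finset.range n,
          QL Q L (Ek k ω) / Qtot Q (Ek k ω)) atTop atTop := by
        refine tendsto_sum_atTop_of_mul_le (ε := 1/α₂) (by positivity) (fun k => ?_) ht
        have hpos := hQtot_pos (Ek k ω)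
        calc (1/α₂) * c k ω = QL Q L (Ek k ω) / α₂ := by
              rw [hcdef]; ring
          _ ≤ QL Q L (Ek k ω) / Qtot Q (Ek k ω) :=
              div_le_div_of_nonneg_left (hf0 _) hpos (hrate' _).2
      exact (tendsto_congr fun n => Finset.sum_congr rfl fun k _ => (h2 k).symm).1 ht'
  -- combine everything
  filter_upwards [hA, stepB] with ω hAω hBω
  rw [hpath ω, hAω]
  exact hBω.symm
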